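/- If P is a pointer list of length greater than 4 and cdr(P) ≠ P, then cde(cdr(P)) ≠ cdr(P); i.e., after a nontrivial context-directed reversal, a context-directed excision is applicable. -/

import Mathlib

/-- A finite sequence of integers (0-indexed list) is a *pointer list*:
(1) even positive length; (2) unique index of minimum absolute value;
(3) unique index of maximum absolute value; (4) each intermediate absolute
value occurs at exactly one other index; (5) for each even (0-based) index i,
x i ≤ x (i+1) and x i * x (i+1) > 0; (6) for each even (0-based) index i no
entry has absolute value strictly between |x i| and |x (i+1)|. -/
def IsPointerList (P : List ℤ) : Prop :=
  P.length % 2 = 0 ∧ 0 < P.length ∧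
  (∃! i, i < P.length ∧ ∀ j < P.length, |P.getD i 0| ≤ |P.getD j 0|) ∧
  (∃! i, i < P.length ∧ ∀ j < P.length, |P.getD j 0| ≤ |P.getD i 0|) ∧
  (∀ i < P.length, (∃ j < P.length, |P.getD j 0| < |P.getD i 0|) →
      (∃ j < P.length, |P.getD i 0| < |P.getD j 0|) →
      ∃! j, j < P.length ∧ j ≠ i ∧ |P.getD j 0| = |P.getD i 0|) ∧
  (∀ i, i % 2 = 0 → i + 1 < P.length →
      P.getD i 0 ≤ P.getD (i+1) 0 ∧ 0 < P.getD i 0 * P.getD (i+1) 0) ∧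
  (∀ i, i % 2 = 0 → i + 1 < P.length →
      ¬ ∃ j < P.length,
        (|P.getD i 0| < |P.getD j 0| ∧ |P.getD j 0| < |P.getD (i+1) 0|) ∨
        (|P.getD (i+1) 0| < |P.getD j 0| ∧ |P.getD j 0| < |P.getD i 0|))

-- Context directed excision: delete the first adjacent equal pair, if any.
open Classical in
noncomputable def cde (P : List ℤ) : List ℤ :=
  if h : ∃ i, i + 1 < P.length ∧ P.getD i 0 = P.getD (i+1) 0 then
    P.take (Nat.find h) ++ P.drop (Nat.find h + 2)
  else P

-- Context directed reversal: for the minimal i admitting j > i with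
-- x i = -(x j) (and the minimal such j), reverse and negate the segment
-- from position i+1 through j.
open Classical in
noncomputable def cdr (P : List ℤ) : List ℤ :=
  if h : ∃ i, ∃ j, i < j ∧ j < P.length ∧ P.getD i 0 = -(P.getD j 0) then
    let i := Nat.find h
    let j := Nat.find (Nat.find_spec h)
    P.take (i+1) ++ (((P.drop (i+1)).take (j - i)).reverse.map (fun z => -z)) ++
      P.drop (j+1)
  else P

-- Context directed block swap: for the lexicographically least (i, j)
-- admitting k, ℓ with i < j < k < ℓ, x i = x k, x j = x ℓ, interchange
-- the blocks x_{i+1}..x_{j-1} and x_k..x_ℓ.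
open Classical in
noncomputable def cds (P : List ℤ) : List ℤ :=
  if h : ∃ i, ∃ j, ∃ k, ∃ l, i < j ∧ j < k ∧ k < l ∧ l < P.length ∧
      P.getD i 0 = P.getD k 0 ∧ P.getD j 0 = P.getD l 0 then
    let i := Nat.find h
    let j := Nat.find (Nat.find_spec h)
    let k := Nat.find (Nat.find_spec (Nat.find_spec h))
    let l := Nat.find (Nat.find_spec (Nat.find_spec (Nat.find_spec h)))
    P.take (i+1) ++ ((P.drop k).take (l - k + 1)) ++ ((P.drop j).take (k - j)) ++
      ((P.drop (i+1)).take (j - i - 1)) ++ P.drop (l+1)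
  else P

/-- The doubling map π: each entry z is replaced by (z, z+1) if z > 0
and by (z-1, z) if z < 0. -/
def piMap (M : List ℤ) : List ℤ :=
  M.flatMap (fun z => if 0 < z then [z, z + 1] else [z - 1, z])

/-- One step of the HNS algorithm: apply cde if applicable, else cds if
applicable, else cdr. -/
noncomputable def hnsStep (P : List ℤ) : List ℤ :=
  if cde P ≠ P then cde P else if cds P ≠ P then cds P else cdr P

/-- after a nontrivial cdr on a pointer list of length > 4,
a cde is applicable. -/
theorem stmt9 (P : List ℤ) (hP : IsPointerList P) (hlen : 4 < P.length)
    (h : cdr P ≠ P) :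
    cde (cdr P) ≠ cdr P := by
  classical
  have hex : ∃ i, ∃ j, i < j ∧ j < P.length ∧ P.getD i 0 = -(P.getD j 0) := by
    by_contra hex
    rw [cdr] at h
    rw [dif_neg hex] at h
    exact h rfl
  set i := Nat.find hex with hi
  set j := Nat.find (Nat.find_spec hex) with hj
  obtain ⟨hij, hjlen, hval⟩ := Nat.find_spec (Nat.find_spec hex)
  have hQ : cdr P = P.take (i+1) ++ (((P.drop (i+1)).take (j-i)).reverse.map (fun z => -z)) ++ P.drop (j+1) := by
    rw [cdr, dif_pos hex]
  have hAlen : (P.take (i+1)).length = i + 1 := by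
    simp; omega
  have hBlen : ((((P.drop (i+1)).take (j-i)).reverse).map (fun z : ℤ => -z)).length = j - i := by
    simp; omega
  have hQlen : (cdr P).length = P.length := by
    rw [hQ]; simp; omega
  have hvi : (cdr P).getD i 0 = P.getD i 0 := by
    rw [hQ, List.getD_eq_getElem _ _ (by simp only [List.length_append, hAlen, hBlen, List.length_drop]; omega)]
    rw [List.getElem_append_left (by simp only [List.length_append, hAlen, hBlen]; omega),
        List.getElem_append_left (by simp only [hAlen]; omega)]
    exact (List.getElem_take).trans (List.getD_eq_getElem _ _ (by omega)).symm
  have hvi1 : (cdr P).getD (i+1) 0 = -(P.getD j 0) := by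
    rw [hQ, List.getD_eq_getElem _ _ (by simp only [List.length_append, hAlen, hBlen, List.length_drop]; omega)]
    rw [List.getElem_append_left (bs := P.drop (j+1)) (by simp only [List.length_append, hAlen, hBlen]; omega)]
    rw [List.getElem_append_right (by simp only [hAlen]; omega)]
    have h0 : i + 1 - (P.take (i+1)).length = 0 := by rw [hAlen]; omega
    simp only [h0]
    rw [List.getElem_map, List.getElem_reverse, List.getElem_take, List.getElem_drop]
    have hidx : i + 1 + (((P.drop (i + 1)).take (j - i)).length - 1 - 0) = j := by
      simp; omega
    simp only [hidx]
    exact congrArg Neg.neg (List.getD_eq_getElem _ _ (by omega)).symm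
  have hc : ∃ k, k + 1 < (cdr P).length ∧
      (cdr P).getD k 0 = (cdr P).getD (k+1) 0 := by
    refine ⟨i, by omega, ?_⟩
    rw [hvi, hvi1, hval]
  intro heq
  have hlen2 := congrArg List.length heq
  rw [cde, dif_pos hc] at hlen2
  have hfind := Nat.find_spec hc
  set m := Nat.find hc with hm
  simp only [List.length_append, List.length_take, List.length_drop] at hlen2
  omega
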